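/- Let R = ∏_{i ∈ I} R_i be a product of connected commutative unital rings. For every first-order ring formula θ(x₀,…,xₙ,w) and all f₀,…,fₙ ∈ R there exists g ∈ R such that ⟦∃w θ(f̄,w)⟧ ≤ ⟦θ(f̄,g)⟧ in the Boolean algebra of idempotents, where ⟦·⟧ denotes Boolean values as determined coordinatewise by satisfaction in the factors R_i. -/
import Mathlib


open FirstOrder

noncomputable local instance (S : Type*) [CommRing S] : FirstOrder.Ring.CompatibleRing S :=
  FirstOrder.Ring.compatibleRingOfRing S

open Classical in
/-- Let `R = ∏ i, R i` be a product of connected commutative unital rings.  For every ring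
formula `θ(x₀,…,xₙ,w)` and tuple `f̄` from `R` there exists `g ∈ R` with
`⟦∃w θ(f̄,w)⟧ ≤ ⟦θ(f̄,g)⟧` in the Boolean algebra of idempotents (where `e ≤ f` iff `ef = e`,
and Boolean values are determined coordinatewise by satisfaction in the factors `R i`). -/
theorem prod_axiom3 (I : Type*) (R : I → Type*) [∀ i, CommRing (R i)]
    (hconn : ∀ i, (0 : R i) ≠ 1 ∧ ∀ x : R i, x * x = x → x = 0 ∨ x = 1)
    {n : ℕ} (θ : Language.ring.Formula (Fin (n + 1))) (f : Fin n → ∀ i, R i)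
    (J₁ : ∀ i, R i)
    (hJ₁ : ∀ i, J₁ i =
      if ∃ w : R i, θ.Realize (Fin.snoc (fun k => f k i) w) then (1 : R i) else 0) :
    ∃ (g : ∀ i, R i) (J₂ : ∀ i, R i),
      (∀ i, J₂ i =
        if θ.Realize (Fin.snoc (fun k => f k i) (g i)) then (1 : R i) else 0) ∧
      J₁ * J₂ = J₁ := by
  refine ⟨fun i => if h : ∃ w : R i, θ.Realize (Fin.snoc (fun k => f k i) w)
      then h.choose else 0,
    fun i => if θ.Realize (Fin.snoc (fun k => f k i)
      (if h : ∃ w : R i, θ.Realize (Fin.snoc (fun k => f k i) w) then h.choose else 0))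
      then (1 : R i) else 0, fun i => rfl, ?_⟩
  funext i
  simp only [Pi.mul_apply, hJ₁]
  by_cases h : ∃ w : R i, θ.Realize (Fin.snoc (fun k => f k i) w)
  · simp [h, h.choose_spec]
  · simp [h]
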